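/- A POVM A is pure state informationally complete (distinguishes all pairs of pure states) if and only if the orthogonal complement R(A)^⊥ contains no selfadjoint operator of rank 2. -/

import Mathlib

open Matrix Kronecker
open scoped ComplexOrder

noncomputable section

def IsPOVM {n : Type*} [Fintype n] [DecidableEq n] {m : ℕ}
    (A : Fin m → Matrix n n ℂ) : Prop :=
  (∀ x, (A x).PosSemidef) ∧ ∑ x, A x = 1

def IsState {n : Type*} [Fintype n] [DecidableEq n] (ρ : Matrix n n ℂ) : Prop :=
  ρ.PosSemidef ∧ ρ.trace = 1

def IsPureState {n : Type*} [Fintype n] [DecidableEq n] (ρ : Matrix n n ℂ) : Prop :=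
  ρ.IsHermitian ∧ ρ * ρ = ρ ∧ ρ.rank = 1

def Rspan {n : Type*} [Fintype n] [DecidableEq n] {ι : Type*}
    (A : ι → Matrix n n ℂ) : Submodule ℝ (Matrix n n ℂ) :=
  Submodule.span ℝ (Set.range A)

def RPerp {n : Type*} [Fintype n] [DecidableEq n] {m : ℕ}
    (A : Fin m → Matrix n n ℂ) : Set (Matrix n n ℂ) :=
  {T | T.IsHermitian ∧ ∀ S ∈ Rspan A, (S * T).trace = 0}

def herm (n : Type*) [Fintype n] [DecidableEq n] : Submodule ℝ (Matrix n n ℂ) where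
  carrier := {T | T.IsHermitian}
  add_mem' := fun h1 h2 => h1.add h2
  zero_mem' := Matrix.isHermitian_zero
  smul_mem' := fun c T h => by
    rw [Set.mem_setOf_eq, Matrix.IsHermitian, Matrix.conjTranspose_smul, star_trivial, h]

def hermPerp {n : Type*} [Fintype n] [DecidableEq n]
    (V : Submodule ℝ (Matrix n n ℂ)) : Submodule ℝ (Matrix n n ℂ) where
  carrier := {T | T.IsHermitian ∧ ∀ S ∈ V, (S * T).trace = 0}
  add_mem' := fun h1 h2 => ⟨h1.1.add h2.1, fun S hS => by
    rw [mul_add, Matrix.trace_add, h1.2 S hS, h2.2 S hS, add_zero]⟩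
  zero_mem' := ⟨Matrix.isHermitian_zero, fun S _ => by simp⟩
  smul_mem' := fun c T h => ⟨by
      rw [Matrix.IsHermitian, Matrix.conjTranspose_smul, star_trivial, h.1],
    fun S hS => by rw [Matrix.mul_smul, Matrix.trace_smul, h.2 S hS, smul_zero]⟩

def tensSub {nA nB : Type*} [Fintype nA] [DecidableEq nA] [Fintype nB] [DecidableEq nB]
    (U : Submodule ℝ (Matrix nA nA ℂ)) (V : Submodule ℝ (Matrix nB nB ℂ)) :
    Submodule ℝ (Matrix (nA × nB) (nA × nB) ℂ) :=
  Submodule.span ℝ {T | ∃ S ∈ U, ∃ R ∈ V, T = S ⊗ₖ R}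

noncomputable def rankPM {n : Type*} [Fintype n] [DecidableEq n]
    (T : Matrix n n ℂ) (hT : T.IsHermitian) : ℕ :=
  min (Finset.univ.filter fun i => 0 < hT.eigenvalues i).card
      (Finset.univ.filter fun i => hT.eigenvalues i < 0).card

section Aux
set_option linter.unusedSectionVars false

variable {n : Type*} [Fintype n] [DecidableEq n]

lemma aux_rank_sub_le (A B : Matrix n n ℂ) : (A - B).rank ≤ A.rank + B.rank := by
  have hrange : LinearMap.range (A - B).mulVecLin ≤
      LinearMap.range A.mulVecLin ⊔ LinearMap.range B.mulVecLin := by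
    rintro x ⟨v, rfl⟩
    have : (A - B).mulVecLin v = A.mulVecLin v - B.mulVecLin v := by
      simp [Matrix.mulVecLin_apply, Matrix.sub_mulVec]
    rw [this]
    exact Submodule.sub_mem _ (Submodule.mem_sup_left ⟨v, rfl⟩)
      (Submodule.mem_sup_right ⟨v, rfl⟩)
  calc (A - B).rank
      ≤ Module.finrank ℂ ↥(LinearMap.range A.mulVecLin ⊔ LinearMap.range B.mulVecLin) :=
        Submodule.finrank_mono hrange
    _ ≤ A.rank + B.rank := Submodule.finrank_add_le_finrank_add_finrank _ _

def projK (V : Matrix n n ℂ) (k : n) : Matrix n n ℂ :=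
  V * Matrix.diagonal (Pi.single k 1) * Vᴴ

lemma conj_cancel {V X Y : Matrix n n ℂ} (h2 : Vᴴ * V = 1)
    (h : V * X * Vᴴ = V * Y * Vᴴ) : X = Y := by
  have h' := congrArg (fun M => Vᴴ * M * V) h
  simp only [← mul_assoc] at h'
  rw [h2, Matrix.one_mul, Matrix.one_mul] at h'
  rw [mul_assoc, mul_assoc, h2, Matrix.mul_one, Matrix.mul_one] at h'
  exact h' 

lemma projK_pure {V : Matrix n n ℂ} (h1 : V * Vᴴ = 1) (h2 : Vᴴ * V = 1) (k : n) :
    IsPureState (projK V k) := by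
  have hE : (Matrix.diagonal (Pi.single k (1:ℂ)))ᴴ = Matrix.diagonal (Pi.single k 1) := by
    ext i j
    by_cases h : i = j
    · subst h
      simp only [Matrix.conjTranspose_apply, Matrix.diagonal_apply_eq, Pi.single_apply]
      split_ifs <;> simp
    · have h' : ¬ j = i := fun hh => h hh.symm
      simp [Matrix.conjTranspose_apply, Matrix.diagonal_apply, h, h']
  refine ⟨?_, ?_, ?_⟩
  · show (V * Matrix.diagonal (Pi.single k 1) * Vᴴ)ᴴ = _
    rw [Matrix.conjTranspose_mul, Matrix.conjTranspose_mul, Matrix.conjTranspose_conjTranspose,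
      hE, ← mul_assoc]
    rfl
  · show (V * Matrix.diagonal (Pi.single k 1) * Vᴴ) * (V * Matrix.diagonal (Pi.single k 1) * Vᴴ) = _
    have hEE : Matrix.diagonal (Pi.single k (1:ℂ)) * Matrix.diagonal (Pi.single k 1)
        = Matrix.diagonal (Pi.single k 1) := by
      rw [Matrix.diagonal_mul_diagonal]
      apply congrArg Matrix.diagonal
      funext i
      by_cases h : i = k <;> simp [Pi.single_apply, h]
    calc V * Matrix.diagonal (Pi.single k 1) * Vᴴ * (V * Matrix.diagonal (Pi.single k 1) * Vᴴ)
        = V * Matrix.diagonal (Pi.single k 1) * (Vᴴ * V) * Matrix.diagonal (Pi.single k 1) * Vᴴ := by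
          simp only [mul_assoc]
      _ = V * Matrix.diagonal (Pi.single k 1) * Vᴴ := by
          rw [h2, Matrix.mul_one, mul_assoc, mul_assoc, ← mul_assoc (Matrix.diagonal _), hEE,
            ← mul_assoc]
  · have hdet : V.det * Vᴴ.det = 1 := by
      rw [← Matrix.det_mul, h1, Matrix.det_one]
    have hdV : IsUnit V.det := IsUnit.of_mul_eq_one _ hdet
    have hdVH : IsUnit Vᴴ.det := IsUnit.of_mul_eq_one _ (mul_comm V.det Vᴴ.det ▸ hdet)
    unfold projK
    rw [mul_assoc, Matrix.rank_mul_eq_right_of_isUnit_det V _ hdV,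
      Matrix.rank_mul_eq_left_of_isUnit_det Vᴴ _ hdVH, Matrix.rank_diagonal,
      Fintype.card_subtype]
    have : (Finset.univ.filter fun i => (Pi.single k 1 : n → ℂ) i ≠ 0) = {k} := by
      ext i
      simp [Pi.single_apply]
    rw [this, Finset.card_singleton]

lemma projK_trace {V : Matrix n n ℂ} (h2 : Vᴴ * V = 1) (k : n) :
    (projK V k).trace = 1 := by
  unfold projK
  rw [Matrix.trace_mul_comm, ← mul_assoc, h2, Matrix.one_mul, Matrix.trace_diagonal]
  simp

lemma projK_ne {V : Matrix n n ℂ} (h2 : Vᴴ * V = 1) {i j : n} (hij : i ≠ j) :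
    projK V i ≠ projK V j := by
  intro h
  have := conj_cancel h2 h
  have h11 : Matrix.diagonal (Pi.single i (1:ℂ)) i i = Matrix.diagonal (Pi.single j (1:ℂ)) i i := by
    rw [this]
  simp [Matrix.diagonal_apply_eq, Pi.single_apply, hij] at h11

lemma trace_eq_sum_eigs {T : Matrix n n ℂ} (hT : T.IsHermitian) :
    T.trace = ∑ k, (hT.eigenvalues k : ℂ) := by
  have h2 : (hT.eigenvectorUnitary : Matrix n n ℂ)ᴴ * (hT.eigenvectorUnitary : Matrix n n ℂ) = 1 := by
    rw [← Matrix.star_eq_conjTranspose]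
    exact Matrix.mem_unitaryGroup_iff'.mp hT.eigenvectorUnitary.2
  conv_lhs => rw [hT.spectral_theorem]
  rw [← Matrix.star_eq_conjTranspose] at h2
  rw [Unitary.conjStarAlgAut_apply]
  rw [Matrix.trace_mul_comm, ← mul_assoc, h2, Matrix.one_mul, Matrix.trace_diagonal]
  rfl

lemma trace_pure {P : Matrix n n ℂ} (hP : IsPureState P) : P.trace = 1 := by
  obtain ⟨hH, hidem, hrank⟩ := hP
  set V := (hH.eigenvectorUnitary : Matrix n n ℂ) with hV
  have h1 : V * Vᴴ = 1 := by
    rw [← Matrix.star_eq_conjTranspose]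
    exact Matrix.mem_unitaryGroup_iff.mp hH.eigenvectorUnitary.2
  have h2 : Vᴴ * V = 1 := by
    rw [← Matrix.star_eq_conjTranspose]
    exact Matrix.mem_unitaryGroup_iff'.mp hH.eigenvectorUnitary.2
  have hcard : Fintype.card {i // hH.eigenvalues i ≠ 0} = 1 := by
    rw [← hH.rank_eq_card_non_zero_eigs, hrank]
  obtain ⟨k₀, hk₀⟩ := Fintype.card_eq_one_iff.mp hcard
  set D := Matrix.diagonal (RCLike.ofReal ∘ hH.eigenvalues : n → ℂ) with hD
  have hspec : P = V * D * Vᴴ := by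
    rw [hD, hV, ← Matrix.star_eq_conjTranspose]
    exact hH.spectral_theorem
  have hDD : D * D = D := by
    apply conj_cancel h2
    have hh : (V * D * Vᴴ) * (V * D * Vᴴ) = V * (D * D) * Vᴴ := by
      calc (V * D * Vᴴ) * (V * D * Vᴴ) = V * D * (Vᴴ * V) * D * Vᴴ := by
            simp only [mul_assoc]
        _ = V * (D * D) * Vᴴ := by
            rw [h2, Matrix.mul_one]
            simp only [mul_assoc]
    rw [← hh, ← hspec, hidem, hspec]
  have heig : ∀ k, hH.eigenvalues k = 0 ∨ hH.eigenvalues k = 1 := by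
    intro k
    have hk : (D * D) k k = D k k := by rw [hDD]
    rw [hD, Matrix.diagonal_mul_diagonal] at hk
    simp only [Matrix.diagonal_apply_eq, Pi.mul_apply, Function.comp_apply] at hk
    have : hH.eigenvalues k * hH.eigenvalues k = hH.eigenvalues k := by exact_mod_cast hk
    have h0 : hH.eigenvalues k * (hH.eigenvalues k - 1) = 0 := by nlinarith [this]
    rcases mul_eq_zero.mp h0 with h | h
    · exact Or.inl h
    · exact Or.inr (by linarith)
  have htr : P.trace = ∑ k, (hH.eigenvalues k : ℂ) := trace_eq_sum_eigs hH
  rw [htr]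
  rw [Finset.sum_eq_single k₀.1]
  · have h0 : hH.eigenvalues k₀.1 ≠ 0 := k₀.2
    rcases heig k₀.1 with h | h
    · exact absurd h h0
    · rw [h]; norm_num
  · intro k _ hk
    have : hH.eigenvalues k = 0 := by
      by_contra h
      exact hk (congrArg Subtype.val (hk₀ ⟨k, h⟩))
    rw [this]; norm_num
  · intro h; exact absurd (Finset.mem_univ _) h


lemma smul_diag_single (c : ℂ) (i : n) :
    c • Matrix.diagonal (Pi.single i (1:ℂ)) = Matrix.diagonal (Pi.single i c) := by
  ext k l
  by_cases h : k = l
  · subst h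
    by_cases h2 : k = i <;>
      simp [Matrix.smul_apply, Matrix.diagonal_apply_eq, Pi.single_apply, h2]
  · simp [Matrix.smul_apply, Matrix.diagonal_apply_ne _ h]

end Aux

/-- A POVM `A` is pure state informationally complete iff `R(A)^⊥`
contains no selfadjoint operator of rank 2. -/
theorem stmt3 {d m : ℕ} (A : Fin m → Matrix (Fin d) (Fin d) ℂ) (hA : IsPOVM A) :
    (∀ P Q : Matrix (Fin d) (Fin d) ℂ, IsPureState P → IsPureState Q →
      (∀ x, (P * A x).trace = (Q * A x).trace) → P = Q) ↔
    ¬ ∃ T ∈ RPerp A, T.rank = 2 := by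
  classical
  constructor
  · intro hPSIC
    rintro ⟨T, ⟨hTH, hTperp⟩, hrank⟩
    set V := (hTH.eigenvectorUnitary : Matrix (Fin d) (Fin d) ℂ) with hV
    have h1 : V * Vᴴ = 1 := by
      rw [← Matrix.star_eq_conjTranspose]
      exact Matrix.mem_unitaryGroup_iff.mp hTH.eigenvectorUnitary.2
    have h2 : Vᴴ * V = 1 := by
      rw [← Matrix.star_eq_conjTranspose]
      exact Matrix.mem_unitaryGroup_iff'.mp hTH.eigenvectorUnitary.2
    have hcard : Nat.card {i // hTH.eigenvalues i ≠ 0} = 2 := by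
      rw [Nat.card_eq_fintype_card, ← hTH.rank_eq_card_non_zero_eigs, hrank]
    obtain ⟨a, b, hab, huniv⟩ := Nat.card_eq_two_iff.mp hcard
    have hij : a.1 ≠ b.1 := fun h => hab (Subtype.ext h)
    have hzero : ∀ k, k ≠ a.1 → k ≠ b.1 → hTH.eigenvalues k = 0 := by
      intro k hka hkb
      by_contra h
      have hk : (⟨k, h⟩ : {i // hTH.eigenvalues i ≠ 0}) ∈ ({a, b} : Set _) := by
        rw [huniv]; trivial
      simp only [Set.mem_insert_iff, Set.mem_singleton_iff] at hk
      rcases hk with hk | hk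
      · exact hka (congrArg Subtype.val hk)
      · exact hkb (congrArg Subtype.val hk)
    have hfun : (RCLike.ofReal ∘ hTH.eigenvalues : Fin d → ℂ)
        = Pi.single a.1 ((hTH.eigenvalues a.1 : ℂ)) + Pi.single b.1 ((hTH.eigenvalues b.1 : ℂ)) := by
      funext k
      by_cases hka : k = a.1
      · subst hka
        simp [Pi.single_apply, hij, (Ne.symm hij)]
      · by_cases hkb : k = b.1
        · subst hkb
          simp [Pi.single_apply, hka]
        · simp [Pi.single_apply, hka, hkb, hzero k hka hkb]
    have hdiag : Matrix.diagonal (RCLike.ofReal ∘ hTH.eigenvalues : Fin d → ℂ)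
        = (hTH.eigenvalues a.1 : ℂ) • Matrix.diagonal (Pi.single a.1 1)
          + (hTH.eigenvalues b.1 : ℂ) • Matrix.diagonal (Pi.single b.1 1) := by
      rw [hfun, smul_diag_single, smul_diag_single, Matrix.diagonal_add]
      rfl
    have hspec : T = V * Matrix.diagonal (RCLike.ofReal ∘ hTH.eigenvalues) * Vᴴ :=
      hTH.spectral_theorem
    have hT2 : T = (hTH.eigenvalues a.1 : ℂ) • projK V a.1
        + (hTH.eigenvalues b.1 : ℂ) • projK V b.1 := by
      conv_lhs => rw [hspec]
      rw [hdiag]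
      unfold projK
      simp only [Matrix.mul_add, Matrix.add_mul, Matrix.mul_smul, Matrix.smul_mul]
    have h1mem : (1 : Matrix (Fin d) (Fin d) ℂ) ∈ Rspan A := by
      rw [← hA.2]
      exact Submodule.sum_mem _ fun x _ => Submodule.subset_span ⟨x, rfl⟩
    have htr0 : T.trace = 0 := by
      have := hTperp 1 h1mem
      rwa [Matrix.one_mul] at this
    have hsum : (hTH.eigenvalues a.1 : ℂ) + (hTH.eigenvalues b.1 : ℂ) = 0 := by
      rw [hT2, Matrix.trace_add, Matrix.trace_smul, Matrix.trace_smul,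
        projK_trace h2, projK_trace h2] at htr0
      simpa using htr0
    have ha0 : (hTH.eigenvalues a.1 : ℂ) ≠ 0 := Complex.ofReal_ne_zero.mpr a.2
    have heq : ∀ x, (projK V a.1 * A x).trace = (projK V b.1 * A x).trace := by
      intro x
      have hx : (A x * T).trace = 0 := hTperp (A x) (Submodule.subset_span ⟨x, rfl⟩)
      rw [hT2, Matrix.mul_add, Matrix.trace_add, Matrix.mul_smul, Matrix.mul_smul,
        Matrix.trace_smul, Matrix.trace_smul] at hx
      have hb : (hTH.eigenvalues b.1 : ℂ) = -(hTH.eigenvalues a.1 : ℂ) := by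
        linear_combination hsum
      rw [hb] at hx
      have hx' : (hTH.eigenvalues a.1 : ℂ)
          * ((A x * projK V a.1).trace - (A x * projK V b.1).trace) = 0 := by
        simp only [smul_eq_mul, neg_mul, neg_smul] at hx ⊢
        linear_combination hx
      have := sub_eq_zero.mp ((mul_eq_zero.mp hx').resolve_left ha0)
      rw [Matrix.trace_mul_comm, this, Matrix.trace_mul_comm]
    exact projK_ne h2 hij
      (hPSIC _ _ (projK_pure h1 h2 a.1) (projK_pure h1 h2 b.1) heq)
  · intro hno P Q hP hQ hstat
    by_contra hne
    apply hno
    have hH : (P - Q).IsHermitian := hP.1.sub hQ.1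
    refine ⟨P - Q, ⟨hH, ?_⟩, ?_⟩
    · let φ : Matrix (Fin d) (Fin d) ℂ →ₗ[ℝ] ℂ :=
        { toFun := fun S => (S * (P - Q)).trace
          map_add' := fun S R => by rw [Matrix.add_mul, Matrix.trace_add]
          map_smul' := fun c S => by rw [Matrix.smul_mul, Matrix.trace_smul]; rfl }
      have hle : Rspan A ≤ LinearMap.ker φ := by
        rw [Rspan, Submodule.span_le]
        rintro _ ⟨x, rfl⟩
        show φ (A x) = 0
        show (A x * (P - Q)).trace = 0
        rw [Matrix.mul_sub, Matrix.trace_sub, Matrix.trace_mul_comm,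
          Matrix.trace_mul_comm (A x) Q, hstat x, sub_self]
      intro S hS
      exact hle hS
    · have hle2 : (P - Q).rank ≤ 2 := by
        calc (P - Q).rank ≤ P.rank + Q.rank := aux_rank_sub_le P Q
          _ = 2 := by rw [hP.2.2, hQ.2.2]
      have hsub0 : P - Q ≠ 0 := sub_ne_zero.mpr hne
      have htr : (P - Q).trace = 0 := by
        rw [Matrix.trace_sub, trace_pure hP, trace_pure hQ, sub_self]
      have hne0 : (P - Q).rank ≠ 0 := by
        intro h
        have hcard : Fintype.card {i // hH.eigenvalues i ≠ 0} = 0 := by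
          rw [← hH.rank_eq_card_non_zero_eigs, h]
        have hz : ∀ k, hH.eigenvalues k = 0 := by
          intro k
          by_contra hk
          exact (Fintype.card_eq_zero_iff.mp hcard).false ⟨k, hk⟩
        have hfun0 : (RCLike.ofReal ∘ hH.eigenvalues : Fin d → ℂ) = 0 := by
          funext k; simp [hz k]
        have : P - Q = 0 := by
          have hspec : P - Q = (hH.eigenvectorUnitary : Matrix (Fin d) (Fin d) ℂ)
              * Matrix.diagonal (RCLike.ofReal ∘ hH.eigenvalues)
              * star (hH.eigenvectorUnitary : Matrix (Fin d) (Fin d) ℂ) := hH.spectral_theorem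
          rw [hspec, hfun0]
          have : Matrix.diagonal (0 : Fin d → ℂ) = 0 := Matrix.diagonal_zero
          rw [this, Matrix.mul_zero, Matrix.zero_mul]
        exact hsub0 this
      have hne1 : (P - Q).rank ≠ 1 := by
        intro h
        have hcard : Fintype.card {i // hH.eigenvalues i ≠ 0} = 1 := by
          rw [← hH.rank_eq_card_non_zero_eigs, h]
        obtain ⟨k₀, hk₀⟩ := Fintype.card_eq_one_iff.mp hcard
        have hsum : (P - Q).trace = ∑ k, (hH.eigenvalues k : ℂ) := trace_eq_sum_eigs hH
        have hss : ∑ k, (hH.eigenvalues k : ℂ) = (hH.eigenvalues k₀.1 : ℂ) := by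
          apply Finset.sum_eq_single
          · intro k _ hk
            have : hH.eigenvalues k = 0 := by
              by_contra hz
              exact hk (congrArg Subtype.val (hk₀ ⟨k, hz⟩))
            rw [this]; norm_num
          · intro hmem; exact absurd (Finset.mem_univ _) hmem
        have h0 : (hH.eigenvalues k₀.1 : ℂ) = 0 := by rw [← hss, ← hsum, htr]
        exact k₀.2 (by exact_mod_cast h0)
      omega
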